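/- arXiv:1910.12715 — 2 statements merged into one kernel-verified Lean document; each statement's English description precedes it below -/
import Mathlib

section
/- Let d ≥ 3 be an integer and define p_k = ((d-1)/((d-2)k+2d-1)) · ∏_{j=0}^{k-1} ((d-2)j + d)/((d-2)j + 2d-1) for k ≥ 0. Then p_k = (1 + 1/(d-2)) · Γ(k + d/(d-2)) Γ((2d-1)/(d-2)) / (Γ(k + 1 + (2d-1)/(d-2)) Γ(d/(d-2))), and consequently p_k is asymptotically of order k^{-(2d-3)/(d-2)}. -/
open Finset Real

lemma gammaProd (a b : ℝ) (ha : 0 < a) (hb : 0 < b) : ∀ k : ℕ,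
    ∏ j ∈ Finset.range k, ((j : ℝ) + a) / ((j : ℝ) + b)
      = Real.Gamma ((k : ℝ) + a) * Real.Gamma b / (Real.Gamma ((k : ℝ) + b) * Real.Gamma a) := by
  intro k
  induction k with
  | zero =>
    simp only [Finset.range_zero, Finset.prod_empty, Nat.cast_zero, zero_add]
    have g3 : Real.Gamma a ≠ 0 := (Real.Gamma_pos_of_pos ha).ne'
    have g4 : Real.Gamma b ≠ 0 := (Real.Gamma_pos_of_pos hb).ne'
    field_simp
  | succ k ih =>
    have hka : (0:ℝ) < (k:ℝ) + a := by positivity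
    have hkb : (0:ℝ) < (k:ℝ) + b := by positivity
    rw [Finset.prod_range_succ, ih]
    push_cast
    have e1 : (k:ℝ) + 1 + a = ((k:ℝ) + a) + 1 := by ring
    have e2 : (k:ℝ) + 1 + b = ((k:ℝ) + b) + 1 := by ring
    rw [e1, e2, Real.Gamma_add_one hka.ne', Real.Gamma_add_one hkb.ne']
    have g1 : Real.Gamma ((k:ℝ) + a) ≠ 0 := (Real.Gamma_pos_of_pos hka).ne'
    have g2 : Real.Gamma ((k:ℝ) + b) ≠ 0 := (Real.Gamma_pos_of_pos hkb).ne'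
    have g3 : Real.Gamma a ≠ 0 := (Real.Gamma_pos_of_pos ha).ne'
    have g4 : Real.Gamma b ≠ 0 := (Real.Gamma_pos_of_pos hb).ne'
    field_simp

lemma prodPos (a s : ℝ) (ha : 0 < a) (hs : 1 ≤ s) (k : ℕ) :
    0 < ∏ j ∈ Finset.range k, ((j : ℝ) + a) / ((j : ℝ) + a + s) := by
  apply Finset.prod_pos
  intro j _
  have h1 : (0:ℝ) < (j:ℝ) + a := by positivity
  have h2 : (0:ℝ) < (j:ℝ) + a + s := by nlinarith
  positivity

lemma prodLower (a s : ℝ) (ha : 0 < a) (hs : 1 ≤ s) : ∀ k : ℕ,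
    a ^ s ≤ (∏ j ∈ Finset.range k, ((j : ℝ) + a) / ((j : ℝ) + a + s)) * ((k : ℝ) + a) ^ s := by
  intro k
  induction k with
  | zero => simp
  | succ k ih =>
    have hs0 : (0:ℝ) < s := lt_of_lt_of_le one_pos hs
    set x : ℝ := (k:ℝ) + a with hx
    have hx0 : 0 < x := by positivity
    have hxs : 0 < x + s := by positivity
    have hP := prodPos a s ha hs k
    have bern : (x + s) / x ≤ ((x + 1) / x) ^ s := by
      have h1 : (x+1)/x = 1 + 1/x := by field_simp
      have h2 : -(1:ℝ) ≤ 1/x := by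
        have : (0:ℝ) < 1/x := by positivity
        linarith
      have hbern : 1 + s * (1/x) ≤ (1 + 1/x) ^ s := one_add_mul_self_le_rpow_one_add h2 hs
      calc (x+s)/x = 1 + s * (1/x) := by field_simp
        _ ≤ (1 + 1/x) ^ s := hbern
        _ = ((x+1)/x) ^ s := by rw [h1]
    have key : x ^ s * (x + s) ≤ x * (x + 1) ^ s := by
      have h3 : ((x+1)/x : ℝ) ^ s = (x+1)^s / x^s :=
        Real.div_rpow (show (0:ℝ) ≤ x+1 by positivity) hx0.le s
      rw [h3, div_le_div_iff₀ hx0 (by positivity)] at bern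
      nlinarith
    have hcast : ((k+1:ℕ):ℝ) + a = x + 1 := by rw [hx]; push_cast; ring
    rw [Finset.prod_range_succ, hcast]
    calc a ^ s ≤ (∏ j ∈ Finset.range k, ((j : ℝ) + a) / ((j : ℝ) + a + s)) * x ^ s := ih
      _ ≤ (∏ j ∈ Finset.range k, ((j : ℝ) + a) / ((j : ℝ) + a + s)) * (x / (x+s) * (x+1)^s) := by
          apply mul_le_mul_of_nonneg_left _ hP.le
          rw [div_mul_eq_mul_div, le_div_iff₀ hxs]
          nlinarith
      _ = (∏ j ∈ Finset.range k, ((j : ℝ) + a) / ((j : ℝ) + a + s)) * (x / (x+s)) * (x+1)^s := by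
          ring

lemma prodUpper (a s : ℝ) (ha : 0 < a) (hs : 1 ≤ s) : ∀ k : ℕ,
    (∏ j ∈ Finset.range k, ((j : ℝ) + a) / ((j : ℝ) + a + s)) * ((k : ℝ) + a + s - 1) ^ s
      ≤ (a + s - 1) ^ s := by
  intro k
  induction k with
  | zero => simp
  | succ k ih =>
    have hs0 : (0:ℝ) < s := lt_of_lt_of_le one_pos hs
    set y : ℝ := (k:ℝ) + a + s with hy
    have hy1 : 1 < y := by nlinarith [Nat.cast_nonneg (α := ℝ) k]
    have hy0 : 0 < y := by linarith
    have hP := prodPos a s ha hs k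
    have bern : (y - s) / y ≤ ((y - 1) / y) ^ s := by
      have h1 : (y-1)/y = 1 + (-(1/y)) := by field_simp; ring
      have h2 : -(1:ℝ) ≤ -(1/y) := by
        rw [neg_le_neg_iff]
        rw [div_le_one hy0]
        linarith
      have hbern : 1 + s * (-(1/y)) ≤ (1 + (-(1/y))) ^ s := one_add_mul_self_le_rpow_one_add h2 hs
      calc (y-s)/y = 1 + s * (-(1/y)) := by field_simp; ring
        _ ≤ (1 + (-(1/y))) ^ s := hbern
        _ = ((y-1)/y) ^ s := by rw [h1]
    have key : (y - s) * y ^ s ≤ y * (y - 1) ^ s := by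
      have h3 : ((y-1)/y : ℝ) ^ s = (y-1)^s / y^s :=
        Real.div_rpow (show (0:ℝ) ≤ y-1 by linarith) hy0.le s
      rw [h3, div_le_div_iff₀ hy0 (by positivity)] at bern
      nlinarith
    have hcast : ((k+1:ℕ):ℝ) + a + s - 1 = y := by rw [hy]; push_cast; ring
    rw [Finset.prod_range_succ, hcast]
    have hfac : ((k:ℝ) + a) / ((k:ℝ) + a + s) = (y - s)/y := by
      rw [hy]
      congr 1
      ring
    rw [hfac]
    calc (∏ j ∈ Finset.range k, ((j : ℝ) + a) / ((j : ℝ) + a + s)) * ((y-s)/y) * y ^ s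
        ≤ (∏ j ∈ Finset.range k, ((j : ℝ) + a) / ((j : ℝ) + a + s)) * (y - 1) ^ s := by
          rw [mul_assoc, div_mul_eq_mul_div]
          apply mul_le_mul_of_nonneg_left _ hP.le
          rw [div_le_iff₀ hy0]
          nlinarith
      _ ≤ (a + s - 1) ^ s := ih
lemma alg1 (u v w z p q : ℝ) (hw : w ≠ 0) (hz : z ≠ 0) (hp : p ≠ 0) (hq : q ≠ 0) :
    u * v / (w * z) * (p * q)⁻¹ = u / (z * q) * (v / (w * p)) := by
  rw [← div_eq_mul_inv, div_div, div_mul_div_comm,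
    div_eq_div_iff (mul_ne_zero (mul_ne_zero hw hz) (mul_ne_zero hp hq))
      (mul_ne_zero (mul_ne_zero hz hq) (mul_ne_zero hw hp))]
  ring

lemma alg2 (u v p q : ℝ) (hp : p ≠ 0) (hq : q ≠ 0) :
    u * v * (p * q)⁻¹ = u / q * (v / p) := by
  rw [← div_eq_mul_inv, div_mul_div_comm,
    div_eq_div_iff (mul_ne_zero hp hq) (mul_ne_zero hq hp)]
  ring

lemma main_real (D : ℝ) (hD : 3 ≤ D) :
    (∀ k : ℕ,
      ((D - 1) / ((D - 2) * k + 2 * D - 1)) *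
        ∏ j ∈ Finset.range k, ((D - 2) * j + D) / ((D - 2) * j + 2 * D - 1)
      = (1 + 1 / (D - 2)) *
          Real.Gamma ((k : ℝ) + D / (D - 2)) *
          Real.Gamma ((2 * D - 1) / (D - 2)) /
          (Real.Gamma ((k : ℝ) + 1 + (2 * D - 1) / (D - 2)) *
            Real.Gamma (D / (D - 2)))) ∧
    ∃ c₁ c₂ : ℝ, 0 < c₁ ∧ 0 < c₂ ∧ ∀ k : ℕ, 1 ≤ k →
      c₁ * (k : ℝ) ^ (-(2 * D - 3) / (D - 2)) ≤
        ((D - 1) / ((D - 2) * k + 2 * D - 1)) *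
          ∏ j ∈ Finset.range k, ((D - 2) * j + D) / ((D - 2) * j + 2 * D - 1) ∧
      ((D - 1) / ((D - 2) * k + 2 * D - 1)) *
          ∏ j ∈ Finset.range k, ((D - 2) * j + D) / ((D - 2) * j + 2 * D - 1) ≤
        c₂ * (k : ℝ) ^ (-(2 * D - 3) / (D - 2)) := by
  have hD2 : (0:ℝ) < D - 2 := by linarith
  set A := D / (D - 2) with hA
  set S := (D - 1) / (D - 2) with hS
  set B := (2 * D - 1) / (D - 2) with hB
  have hApos : 0 < A := div_pos (by linarith) hD2
  have hS1 : (1:ℝ) ≤ S := by rw [hS, le_div_iff₀ hD2]; linarith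
  have hSpos : (0:ℝ) < S := lt_of_lt_of_le one_pos hS1
  have hBpos : 0 < B := div_pos (by linarith) hD2
  have hB1 : (1:ℝ) ≤ B := by rw [hB, le_div_iff₀ hD2]; linarith
  have hAS : A + S = B := by rw [hA, hS, hB, ← add_div]; congr 1; ring
  clear_value A S B
  have hprod : ∀ k : ℕ,
      ∏ j ∈ Finset.range k, ((D - 2) * j + D) / ((D - 2) * j + 2 * D - 1)
        = ∏ j ∈ Finset.range k, ((j:ℝ) + A) / ((j:ℝ) + A + S) := by
    intro k
    refine Finset.prod_congr rfl fun j _ => ?_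
    have hj0 : (0:ℝ) ≤ (j:ℝ) := Nat.cast_nonneg j
    have hd1 : (0:ℝ) < (D - 2) * j + 2 * D - 1 := by nlinarith
    have hd2 : (0:ℝ) < (j:ℝ) + A + S := by linarith
    rw [div_eq_div_iff hd1.ne' hd2.ne', hA, hS]
    field_simp
    ring
  have hpre : ∀ k : ℕ,
      (D - 1) / ((D - 2) * k + 2 * D - 1) = ((D - 1) / (D - 2)) / ((k:ℝ) + B) := by
    intro k
    have hj0 : (0:ℝ) ≤ (k:ℝ) := Nat.cast_nonneg k
    rw [div_div]
    congr 1
    rw [hB]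
    field_simp
    ring
  constructor
  · intro k
    have hprodB : ∏ j ∈ Finset.range k, ((j:ℝ) + A) / ((j:ℝ) + A + S)
        = ∏ j ∈ Finset.range k, ((j:ℝ) + A) / ((j:ℝ) + B) := by
      refine Finset.prod_congr rfl fun j _ => ?_
      rw [add_assoc, hAS]
    rw [hprod k, hpre k, hprodB, gammaProd A B hApos hBpos k]
    have hkB : (0:ℝ) < (k:ℝ) + B := by
      have : (0:ℝ) ≤ (k:ℝ) := Nat.cast_nonneg k
      linarith
    have e : (k:ℝ) + 1 + B = ((k:ℝ) + B) + 1 := by ring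
    rw [e, Real.Gamma_add_one hkB.ne']
    have hkA : (0:ℝ) < (k:ℝ) + A := by
      have : (0:ℝ) ≤ (k:ℝ) := Nat.cast_nonneg k
      linarith
    have g1 : Real.Gamma ((k:ℝ) + A) ≠ 0 := (Real.Gamma_pos_of_pos hkA).ne'
    have g2 : Real.Gamma ((k:ℝ) + B) ≠ 0 := (Real.Gamma_pos_of_pos hkB).ne'
    have g3 : Real.Gamma A ≠ 0 := (Real.Gamma_pos_of_pos hApos).ne'
    have g4 : Real.Gamma B ≠ 0 := (Real.Gamma_pos_of_pos hBpos).ne'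
    field_simp
    ring
  · have hAS1 : (0:ℝ) < A + S - 1 := by linarith
    refine ⟨(D - 1) / (D - 2) * A ^ S / ((1 + A) ^ S * (1 + B)),
            (D - 1) / (D - 2) * (A + S - 1) ^ S, ?_, ?_, ?_⟩
    · have h1 : (0:ℝ) < (D - 1) / (D - 2) := div_pos (by linarith) hD2
      have h2 : (0:ℝ) < A ^ S := Real.rpow_pos_of_pos hApos S
      have h3 : (0:ℝ) < (1 + A) ^ S := Real.rpow_pos_of_pos (by linarith) S
      positivity
    · have h1 : (0:ℝ) < (D - 1) / (D - 2) := div_pos (by linarith) hD2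
      have h2 : (0:ℝ) < (A + S - 1) ^ S := Real.rpow_pos_of_pos hAS1 S
      positivity
    · intro k hk
      have hK1 : (1:ℝ) ≤ (k:ℝ) := by exact_mod_cast hk
      have hK0 : (0:ℝ) < (k:ℝ) := lt_of_lt_of_le one_pos hK1
      rw [hprod k, hpre k]
      set K := (k:ℝ) with hKdef
      set P := ∏ j ∈ Finset.range k, ((j:ℝ) + A) / ((j:ℝ) + A + S) with hPdef
      have hPpos : 0 < P := prodPos A S hApos hS1 k
      have hKA : (0:ℝ) < K + A := by linarith
      have hKB : (0:ℝ) < K + B := by linarith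
      have hKS : (0:ℝ) < K ^ S := Real.rpow_pos_of_pos hK0 S
      have hKApow : (0:ℝ) < (K + A) ^ S := Real.rpow_pos_of_pos hKA S
      have h1A : (0:ℝ) < (1 + A) ^ S := Real.rpow_pos_of_pos (by linarith) S
      have hC : (0:ℝ) < (D - 1) / (D - 2) := div_pos (by linarith) hD2
      have hexp : -(2 * D - 3) / (D - 2) = -(S + 1) := by
        rw [hS, neg_div]
        congr 1
        field_simp
        ring
      have hrpow : K ^ (-(2 * D - 3) / (D - 2)) = (K ^ S * K)⁻¹ := by
        rw [hexp, Real.rpow_neg hK0.le, Real.rpow_add hK0, Real.rpow_one]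
      rw [hrpow]
      have hlow := prodLower A S hApos hS1 k
      have hup := prodUpper A S hApos hS1 k
      rw [← hKdef, ← hPdef] at hlow hup
      clear_value K P
      constructor
      · -- lower bound
        have step1 : A ^ S / (K + A) ^ S ≤ P := by
          rw [div_le_iff₀ hKApow]; exact hlow
        have step2 : (K + A) ^ S ≤ (1 + A) ^ S * K ^ S := by
          have hle : K + A ≤ (1 + A) * K := by nlinarith
          calc (K + A) ^ S ≤ ((1 + A) * K) ^ S :=
                Real.rpow_le_rpow hKA.le hle hSpos.le
            _ = (1 + A) ^ S * K ^ S := Real.mul_rpow (by linarith) hK0.le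
        have step3 : A ^ S / ((1 + A) ^ S * K ^ S) ≤ A ^ S / (K + A) ^ S := by
          gcongr
        have step4 : (D - 1) / (D - 2) / ((1 + B) * K) ≤ (D - 1) / (D - 2) / (K + B) := by
          gcongr
          nlinarith
        have hid : (D - 1) / (D - 2) * A ^ S / ((1 + A) ^ S * (1 + B)) * (K ^ S * K)⁻¹
            = ((D - 1) / (D - 2) / ((1 + B) * K)) * (A ^ S / ((1 + A) ^ S * K ^ S)) :=
          alg1 _ _ _ _ _ _ h1A.ne' (by positivity) hKS.ne' hK0.ne'
        rw [hid]
        exact mul_le_mul step4 (le_trans step3 step1)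
          (by positivity) (by positivity)
      · -- upper bound
        have hKAS1 : (0:ℝ) < K + A + S - 1 := by linarith
        have hKAS1pow : (0:ℝ) < (K + A + S - 1) ^ S := Real.rpow_pos_of_pos hKAS1 S
        have stepU1 : P ≤ (A + S - 1) ^ S / (K + A + S - 1) ^ S := by
          rw [le_div_iff₀ hKAS1pow]; exact hup
        have stepU2 : K ^ S ≤ (K + A + S - 1) ^ S :=
          Real.rpow_le_rpow hK0.le (by linarith) hSpos.le
        have stepU3 : (A + S - 1) ^ S / (K + A + S - 1) ^ S ≤ (A + S - 1) ^ S / K ^ S := by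
          gcongr
        have stepU4 : (D - 1) / (D - 2) / (K + B) ≤ (D - 1) / (D - 2) / K := by
          gcongr
          linarith
        have hid : (D - 1) / (D - 2) * (A + S - 1) ^ S * (K ^ S * K)⁻¹
            = ((D - 1) / (D - 2) / K) * ((A + S - 1) ^ S / K ^ S) :=
          alg2 _ _ _ _ hKS.ne' hK0.ne'
        rw [hid]
        exact mul_le_mul stepU4 (le_trans stepU1 stepU3)
          hPpos.le (by positivity)

/-- In Model **B** (Random Apollonian Network) with constant fitness in dimension `d ≥ 3`,
the limiting degree distribution
`p_k = ((d-1)/((d-2)k+2d-1)) ∏_{j<k} ((d-2)j+d)/((d-2)j+2d-1)` satisfies the Gamma-function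
identity and is of order `k^{-(2d-3)/(d-2)}`. -/
theorem modelB_constant_fitness (d : ℕ) (hd : 3 ≤ d) :
    (∀ k : ℕ,
      (((d : ℝ) - 1) / (((d : ℝ) - 2) * k + 2 * d - 1)) *
        ∏ j ∈ Finset.range k, (((d : ℝ) - 2) * j + d) / (((d : ℝ) - 2) * j + 2 * d - 1)
      = (1 + 1 / ((d : ℝ) - 2)) *
          Real.Gamma ((k : ℝ) + d / ((d : ℝ) - 2)) *
          Real.Gamma ((2 * (d : ℝ) - 1) / ((d : ℝ) - 2)) /
          (Real.Gamma ((k : ℝ) + 1 + (2 * (d : ℝ) - 1) / ((d : ℝ) - 2)) *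
            Real.Gamma (d / ((d : ℝ) - 2)))) ∧
    ∃ c₁ c₂ : ℝ, 0 < c₁ ∧ 0 < c₂ ∧ ∀ k : ℕ, 1 ≤ k →
      c₁ * (k : ℝ) ^ (-(2 * (d : ℝ) - 3) / ((d : ℝ) - 2)) ≤
        (((d : ℝ) - 1) / (((d : ℝ) - 2) * k + 2 * d - 1)) *
          ∏ j ∈ Finset.range k, (((d : ℝ) - 2) * j + d) / (((d : ℝ) - 2) * j + 2 * d - 1) ∧
      (((d : ℝ) - 1) / (((d : ℝ) - 2) * k + 2 * d - 1)) *
          ∏ j ∈ Finset.range k, (((d : ℝ) - 2) * j + d) / (((d : ℝ) - 2) * j + 2 * d - 1) ≤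
        c₂ * (k : ℝ) ^ (-(2 * (d : ℝ) - 3) / ((d : ℝ) - 2)) := by
  exact main_real (d : ℝ) (by exact_mod_cast hd)
end

section
/- Fix an integer k ≥ 0. For α_0, ..., α_k ≥ 0 and 0 ≤ η ≤ 1/2, define Γ_n(α_0,...,α_k,η) = (1/n) ∑ over integer tuples ηn < i_0 < i_1 < ... < i_k ≤ n of ∏_{ℓ=0}^{k-1} ( (i_ℓ/i_{ℓ+1})^{α_ℓ} / (i_{ℓ+1} − 1) ) · (i_k/n)^{α_k}. Then, as n → ∞, Γ_n(α_0,...,α_k,0) converges to ∏_{ℓ=0}^{k} 1/(α_ℓ + 1). -/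
open Finset Filter Topology

lemma icc_sum_eq (f : ℕ → ℝ) (n : ℕ) :
    ∑ j ∈ Icc 1 n, f j = ∑ i ∈ range n, f (i + 1) := by
  rw [← Finset.Ico_add_one_right_eq_Icc, Finset.sum_Ico_eq_sum_range]
  simp [add_comm]

lemma sum_rpow_asymp {α : ℝ} (hα : 0 ≤ α) :
    Tendsto (fun n : ℕ => (∑ j ∈ Icc 1 n, (j : ℝ) ^ α) / (n : ℝ) ^ (α + 1))
      atTop (𝓝 (1 / (α + 1))) := by
  have hα1 : (0:ℝ) < α + 1 := by linarith
  have hmono : ∀ n : ℕ, MonotoneOn (fun x : ℝ => x ^ α) (Set.Icc (0:ℝ) (0 + n)) := by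
    intro n x hx y hy hxy
    exact Real.rpow_le_rpow hx.1 hxy hα
  have hint : ∀ n : ℕ, ∫ x in (0:ℝ)..(0 + (n:ℝ)), x ^ α = (n:ℝ) ^ (α+1) / (α+1) := by
    intro n
    rw [zero_add, integral_rpow (Or.inl (by linarith))]
    rw [Real.zero_rpow hα1.ne', sub_zero]
  have hS : ∀ n : ℕ, ∑ j ∈ Icc 1 n, (j:ℝ) ^ α = ∑ i ∈ range n, ((i:ℝ)+1) ^ α := by
    intro n
    rw [icc_sum_eq (fun j => (j:ℝ) ^ α) n]
    push_cast
    rfl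
  have hlow : ∀ n : ℕ, (n:ℝ) ^ (α+1) / (α+1) ≤ ∑ j ∈ Icc 1 n, (j:ℝ) ^ α := by
    intro n
    rw [hS, ← hint n]
    have := (hmono n).integral_le_sum
    convert this using 2 with i
    push_cast
    ring
  have hhigh : ∀ n : ℕ, ∑ j ∈ Icc 1 n, (j:ℝ) ^ α ≤ (n:ℝ) ^ (α+1) / (α+1) + (n:ℝ) ^ α := by
    intro n
    have h1 : ∑ i ∈ range n, ((0:ℝ) + (i:ℕ)) ^ α ≤ (n:ℝ) ^ (α+1) / (α+1) := by
      rw [← hint n]; exact (hmono n).sum_le_integral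
    have htel := Finset.sum_range_sub (fun i : ℕ => ((i:ℕ):ℝ) ^ α) n
    have h0 : (0:ℝ) ≤ ((0:ℕ):ℝ) ^ α := Real.rpow_nonneg (by norm_num) α
    have h2 : ∑ j ∈ Icc 1 n, (j:ℝ) ^ α
        = ∑ i ∈ range n, ((i:ℝ)) ^ α + (((n:ℕ):ℝ) ^ α - ((0:ℕ):ℝ) ^ α) := by
      rw [hS, ← htel, ← Finset.sum_add_distrib]
      apply Finset.sum_congr rfl
      intro i _
      push_cast
      ring
    rw [h2]
    have h3 : ∑ i ∈ range n, ((i:ℝ)) ^ α ≤ (n:ℝ) ^ (α+1) / (α+1) := by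
      calc ∑ i ∈ range n, ((i:ℝ)) ^ α = ∑ i ∈ range n, ((0:ℝ) + (i:ℕ)) ^ α := by
            apply Finset.sum_congr rfl; intro i _; rw [zero_add]
        _ ≤ _ := h1
    simp only [Nat.cast_zero] at h0 h2 ⊢
    linarith [h0]
  have hupper : Tendsto (fun n : ℕ => 1/(α+1) + 1/(n:ℝ)) atTop (𝓝 (1/(α+1))) := by
    simpa using (tendsto_const_nhds.add tendsto_one_div_atTop_nhds_zero_nat :
      Tendsto (fun n : ℕ => 1/(α+1) + 1/(n:ℝ)) atTop (𝓝 (1/(α+1) + 0)))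
  refine tendsto_of_tendsto_of_tendsto_of_le_of_le'
    (tendsto_const_nhds : Tendsto (fun _ : ℕ => 1/(α+1)) atTop _) hupper ?_ ?_
  · filter_upwards [eventually_ge_atTop 1] with n hn
    have hnpos : (0:ℝ) < n := by exact_mod_cast hn
    have hpow : (0:ℝ) < (n:ℝ) ^ (α+1) := Real.rpow_pos_of_pos hnpos _
    rw [le_div_iff₀ hpow]
    calc 1/(α+1) * (n:ℝ)^(α+1) = (n:ℝ)^(α+1)/(α+1) := by ring
      _ ≤ _ := hlow n
  · filter_upwards [eventually_ge_atTop 1] with n hn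
    have hnpos : (0:ℝ) < n := by exact_mod_cast hn
    have hpow : (0:ℝ) < (n:ℝ) ^ (α+1) := Real.rpow_pos_of_pos hnpos _
    have hpowα : (0:ℝ) < (n:ℝ) ^ α := Real.rpow_pos_of_pos hnpos _
    rw [div_le_iff₀ hpow]
    have key : (1/(α+1) + 1/(n:ℝ)) * (n:ℝ)^(α+1)
        = (n:ℝ)^(α+1)/(α+1) + (n:ℝ)^α := by
      rw [Real.rpow_add_one hnpos.ne']
      field_simp
    rw [key]
    exact hhigh n

lemma weighted_tendsto {α : ℝ} (hα : 0 ≤ α) {h : ℕ → ℝ} {c : ℝ}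
    (hc : Tendsto h atTop (𝓝 c)) :
    Tendsto (fun n : ℕ => (1/(n:ℝ)) * ∑ j ∈ Icc 1 n, ((j:ℝ)/(n:ℝ)) ^ α * h j)
      atTop (𝓝 (c / (α + 1))) := by
  have hA : Tendsto (fun n : ℕ => (1/(n:ℝ)) * ∑ j ∈ Icc 1 n, ((j:ℝ)/(n:ℝ)) ^ α)
      atTop (𝓝 (1 / (α + 1))) := by
    apply (sum_rpow_asymp hα).congr'
    filter_upwards [eventually_ge_atTop 1] with n hn
    have hnpos : (0:ℝ) < n := by exact_mod_cast hn
    rw [eq_comm]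
    calc (1/(n:ℝ)) * ∑ j ∈ Icc 1 n, ((j:ℝ)/(n:ℝ)) ^ α
        = ∑ j ∈ Icc 1 n, (j:ℝ)^α / (n:ℝ)^(α+1) := by
          rw [Finset.mul_sum]
          apply Finset.sum_congr rfl
          intro j _
          rw [Real.div_rpow (Nat.cast_nonneg j) (Nat.cast_nonneg n),
            Real.rpow_add_one hnpos.ne']
          ring
        _ = (∑ j ∈ Icc 1 n, (j:ℝ)^α) / (n:ℝ)^(α+1) := by
          rw [Finset.sum_div]
  have hE : Tendsto (fun n : ℕ => (1/(n:ℝ)) * ∑ j ∈ Icc 1 n, ((j:ℝ)/(n:ℝ)) ^ α * (h j - c))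
      atTop (𝓝 0) := by
    have hu : Tendsto (fun j : ℕ => |h (j+1) - c|) atTop (𝓝 0) := by
      have : Tendsto (fun j : ℕ => |h j - c|) atTop (𝓝 0) := by
        have := (hc.sub (tendsto_const_nhds : Tendsto (fun _ : ℕ => c) atTop (𝓝 c))).abs
        simpa using this
      exact this.comp (tendsto_add_atTop_nat 1)
    have hces := hu.cesaro
    apply squeeze_zero_norm' _ hces
    filter_upwards [eventually_ge_atTop 1] with n hn
    have hnpos : (0:ℝ) < n := by exact_mod_cast hn
    calc ‖(1/(n:ℝ)) * ∑ j ∈ Icc 1 n, ((j:ℝ)/(n:ℝ)) ^ α * (h j - c)‖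
        ≤ (1/(n:ℝ)) * ∑ j ∈ Icc 1 n, |h j - c| := by
          rw [norm_mul, Real.norm_eq_abs, Real.norm_eq_abs, abs_of_pos (by positivity)]
          apply mul_le_mul_of_nonneg_left _ (by positivity)
          calc |∑ j ∈ Icc 1 n, ((j:ℝ)/(n:ℝ)) ^ α * (h j - c)|
              ≤ ∑ j ∈ Icc 1 n, |((j:ℝ)/(n:ℝ)) ^ α * (h j - c)| :=
                Finset.abs_sum_le_sum_abs _ _
            _ ≤ ∑ j ∈ Icc 1 n, |h j - c| := by
                apply Finset.sum_le_sum
                intro j hj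
                rw [abs_mul]
                have hj' := Finset.mem_Icc.mp hj
                have hw : |((j:ℝ)/(n:ℝ)) ^ α| ≤ 1 := by
                  rw [abs_of_nonneg (Real.rpow_nonneg (by positivity) _)]
                  apply Real.rpow_le_one (by positivity) _ hα
                  rw [div_le_one hnpos]
                  exact_mod_cast hj'.2
                calc |((j:ℝ)/(n:ℝ)) ^ α| * |h j - c| ≤ 1 * |h j - c| :=
                      mul_le_mul_of_nonneg_right hw (abs_nonneg _)
                  _ = |h j - c| := one_mul _
        _ = (n:ℝ)⁻¹ * ∑ i ∈ range n, |h (i+1) - c| := by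
            rw [icc_sum_eq (fun j => |h j - c|) n, one_div]
  have key : (fun n : ℕ => (1/(n:ℝ)) * ∑ j ∈ Icc 1 n, ((j:ℝ)/(n:ℝ)) ^ α * h j)
      = fun n : ℕ => c * ((1/(n:ℝ)) * ∑ j ∈ Icc 1 n, ((j:ℝ)/(n:ℝ)) ^ α)
        + (1/(n:ℝ)) * ∑ j ∈ Icc 1 n, ((j:ℝ)/(n:ℝ)) ^ α * (h j - c) := by
    funext n
    simp only [Finset.mul_sum, ← Finset.sum_add_distrib]
    apply Finset.sum_congr rfl
    intro j _
    ring
  rw [key]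
  have := ((tendsto_const_nhds : Tendsto (fun _ : ℕ => c) atTop (𝓝 c)).mul hA).add hE
  simpa [mul_one_div, div_eq_mul_inv] using this


noncomputable def gammaG : (k : ℕ) → (Fin (k+1) → ℝ) → ℕ → ℕ → ℝ
  | 0, α, m, n => ∑ j ∈ Icc 1 m, ((j:ℝ)/(n:ℝ)) ^ (α 0)
  | (k+1), α, m, n => ∑ j ∈ Icc 1 m, ((j:ℝ)/(n:ℝ)) ^ (α (Fin.last (k+1))) *
      ((1/((j:ℝ)-1)) * gammaG k (fun ℓ => α ℓ.castSucc) (j-1) j)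

noncomputable def gammaP (k : ℕ) (α : Fin (k+1) → ℝ) (m n : ℕ) : ℝ :=
  ∑ i ∈ (Fintype.piFinset fun _ : Fin (k + 1) => Finset.Icc 1 m).filter
      (fun i : Fin (k + 1) → ℕ => ∀ a b : Fin (k + 1), a < b → i a < i b),
    (∏ ℓ : Fin k, (((i ℓ.castSucc : ℝ) / (i ℓ.succ : ℝ)) ^ α ℓ.castSucc *
        (1 / ((i ℓ.succ : ℝ) - 1)))) * ((i (Fin.last k) : ℝ) / (n : ℝ)) ^ α (Fin.last k)

lemma gammaP_eq_gammaG : ∀ (k : ℕ) (α : Fin (k+1) → ℝ) (m n : ℕ),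
    gammaP k α m n = gammaG k α m n := by
  intro k
  induction k with
  | zero =>
    intro α m n
    rw [gammaP, gammaG]
    rw [Finset.filter_true_of_mem (by
      intro i _ a b hab
      exact absurd hab (by omega))]
    refine Finset.sum_nbij' (fun i => i 0) (fun j => fun _ => j) ?_ ?_ ?_ ?_ ?_
    · intro i hi
      exact Fintype.mem_piFinset.mp hi 0
    · intro j hj
      exact Fintype.mem_piFinset.mpr fun _ => hj
    · intro i hi
      funext a
      have : a = 0 := Fin.ext (by omega)
      rw [this]
    · intro j _
      rfl
    · intro i _
      simp
  | succ k ih =>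
    intro α m n
    rw [gammaP, gammaG]
    have key := Finset.sum_nbij'
      (s := (Fintype.piFinset fun _ : Fin (k + 2) => Finset.Icc 1 m).filter
        (fun i : Fin (k + 2) → ℕ => ∀ a b : Fin (k + 2), a < b → i a < i b))
      (t := (Icc 1 m).sigma (fun j =>
        (Fintype.piFinset fun _ : Fin (k + 1) => Finset.Icc 1 (j-1)).filter
          (fun i : Fin (k + 1) → ℕ => ∀ a b : Fin (k + 1), a < b → i a < i b)))
      (f := fun i => (∏ ℓ : Fin (k+1), (((i ℓ.castSucc : ℝ) / (i ℓ.succ : ℝ)) ^ α ℓ.castSucc *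
        (1 / ((i ℓ.succ : ℝ) - 1)))) * ((i (Fin.last (k+1)) : ℝ) / (n : ℝ)) ^ α (Fin.last (k+1)))
      (g := fun p => ((p.1:ℝ)/(n:ℝ)) ^ (α (Fin.last (k+1))) *
        ((1/((p.1:ℝ)-1)) *
          ((∏ ℓ : Fin k, (((p.2 ℓ.castSucc : ℝ) / (p.2 ℓ.succ : ℝ)) ^ α ℓ.castSucc.castSucc *
            (1 / ((p.2 ℓ.succ : ℝ) - 1)))) *
            ((p.2 (Fin.last k) : ℝ) / (p.1 : ℝ)) ^ α (Fin.last k).castSucc)))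
      (fun i => ⟨i (Fin.last (k+1)), fun ℓ => i ℓ.castSucc⟩)
      (fun p => Fin.snoc p.2 p.1)
      ?_ ?_ ?_ ?_ ?_
    · rw [key, Finset.sum_sigma]
      apply Finset.sum_congr rfl
      intro j hj
      conv_rhs => rw [← ih (fun ℓ => α ℓ.castSucc) (j-1) j]
      rw [gammaP]
      simp only [Finset.mul_sum]
    · -- hi : forward membership
      intro i hi
      rw [Finset.mem_filter, Fintype.mem_piFinset] at hi
      obtain ⟨hmem, hmono⟩ := hi
      rw [Finset.mem_sigma]
      constructor
      · exact hmem _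
      · rw [Finset.mem_filter, Fintype.mem_piFinset]
        constructor
        · intro ℓ
          dsimp only
          rw [Finset.mem_Icc]
          have h1 := Finset.mem_Icc.mp (hmem ℓ.castSucc)
          have h2 : i ℓ.castSucc < i (Fin.last (k+1)) :=
            hmono _ _ (Fin.castSucc_lt_last ℓ)
          omega
        · intro a b hab
          exact hmono _ _ (Fin.castSucc_lt_castSucc_iff.mpr hab)
    · -- hj : backward membership
      intro p hp
      obtain ⟨j, i'⟩ := p
      rw [Finset.mem_sigma, Finset.mem_filter, Fintype.mem_piFinset] at hp
      obtain ⟨hj, hmem, hmono⟩ := hp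
      dsimp only at hj hmem hmono
      have hj' := Finset.mem_Icc.mp hj
      rw [Finset.mem_filter, Fintype.mem_piFinset]
      constructor
      · intro a
        dsimp only
        rw [Finset.mem_Icc]
        induction a using Fin.lastCases with
        | last =>
          simp only [Fin.snoc_last]
          omega
        | cast ℓ =>
          simp only [Fin.snoc_castSucc]
          have := Finset.mem_Icc.mp (hmem ℓ)
          omega
      · intro a b
        induction b using Fin.lastCases with
        | last =>
          intro hab'
          have ha : a ≠ Fin.last (k+1) := Fin.ne_last_of_lt hab'
          obtain ⟨a', rfl⟩ := Fin.exists_castSucc_eq.mpr ha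
          simp only [Fin.snoc_last, Fin.snoc_castSucc]
          have := Finset.mem_Icc.mp (hmem a')
          omega
        | cast b' =>
          intro hab'
          have ha : a ≠ Fin.last (k+1) := Fin.ne_last_of_lt (lt_of_lt_of_le hab'
            (Fin.castSucc_lt_last b').le)
          obtain ⟨a', rfl⟩ := Fin.exists_castSucc_eq.mpr ha
          simp only [Fin.snoc_castSucc]
          exact hmono _ _ (Fin.castSucc_lt_castSucc_iff.mp hab')
    · -- left inverse
      intro i _
      exact Fin.snoc_init_self i
    · -- right inverse
      intro p _
      obtain ⟨j, i'⟩ := p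
      simp only [Fin.snoc_last, Fin.snoc_castSucc]
    · -- terms agree
      intro i hi
      dsimp only
      rw [Fin.prod_univ_castSucc]
      simp only [Fin.snoc_castSucc, Fin.succ_castSucc, Fin.succ_last]
      ring

lemma ratio_tendsto : Tendsto (fun j : ℕ => (j:ℝ)/((j:ℝ)-1)) atTop (𝓝 1) := by
  have h1 : Tendsto (fun j : ℕ => 1/((j:ℝ)-1)) atTop (𝓝 0) := by
    have h2 : Tendsto (fun m : ℕ => 1/((m:ℝ))) atTop (𝓝 0) :=
      tendsto_one_div_atTop_nhds_zero_nat
    have h3 : Tendsto (fun j : ℕ => j - 1) atTop atTop :=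
      tendsto_sub_atTop_nat 1
    have := h2.comp h3
    apply this.congr'
    filter_upwards [eventually_ge_atTop 1] with j hj
    have : ((j - 1 : ℕ) : ℝ) = (j:ℝ) - 1 := by
      push_cast [hj]
      ring
    simp [Function.comp, this]
  have := (tendsto_const_nhds.add h1 :
    Tendsto (fun j : ℕ => 1 + 1/((j:ℝ)-1)) atTop (𝓝 (1 + 0)))
  rw [add_zero] at this
  apply this.congr'
  filter_upwards [eventually_ge_atTop 2] with j hj
  have hj2 : (2:ℝ) ≤ (j:ℝ) := by exact_mod_cast hj
  have hne : (j:ℝ) - 1 ≠ 0 := by linarith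
  field_simp
  ring

lemma gammaG_tendsto : ∀ (k : ℕ) (α : Fin (k+1) → ℝ), (∀ j, 0 ≤ α j) →
    Tendsto (fun n : ℕ => (1/(n:ℝ)) * gammaG k α n n) atTop
      (𝓝 (∏ j, 1/(α j + 1))) ∧
    Tendsto (fun n : ℕ => (1/(n:ℝ)) * gammaG k α (n-1) n) atTop
      (𝓝 (∏ j, 1/(α j + 1))) := by
  intro k
  induction k with
  | zero =>
    intro α hα
    have hprod : ∏ j, 1/(α j + 1) = 1 / (α 0 + 1) := by
      rw [Fin.prod_univ_one]
    have hfirst : Tendsto (fun n : ℕ => (1/(n:ℝ)) * gammaG 0 α n n) atTop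
        (𝓝 (∏ j, 1/(α j + 1))) := by
      rw [hprod]
      refine (weighted_tendsto (hα 0) (tendsto_const_nhds :
        Tendsto (fun _ : ℕ => (1:ℝ)) atTop (𝓝 1))).congr fun n => ?_
      rw [gammaG]
      simp [mul_one]
    refine ⟨hfirst, ?_⟩
    have hcorr : Tendsto (fun n : ℕ => (1/(n:ℝ)) * ((n:ℝ)/(n:ℝ)) ^ (α 0)) atTop
        (𝓝 0) := by
      apply tendsto_one_div_atTop_nhds_zero_nat.congr'
      filter_upwards [eventually_ge_atTop 1] with n hn
      have hnpos : (0:ℝ) < n := by exact_mod_cast hn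
      rw [div_self hnpos.ne', Real.one_rpow, mul_one]
    have := hfirst.sub hcorr
    rw [sub_zero] at this
    apply this.congr'
    filter_upwards [eventually_ge_atTop 1] with n hn
    obtain ⟨m, rfl⟩ := Nat.exists_eq_add_of_le hn
    have hsum : gammaG 0 α (1 + m) (1 + m) = gammaG 0 α m (1 + m)
        + (((1+m:ℕ):ℝ)/((1+m:ℕ):ℝ)) ^ (α 0) := by
      rw [gammaG, gammaG, add_comm 1 m, Finset.sum_Icc_succ_top (by omega)]
    have hm : (1 + m) - 1 = m := by omega
    rw [hm, hsum]
    push_cast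
    ring
  | succ k ih =>
    intro α hα
    set α' : Fin (k+1) → ℝ := fun ℓ => α ℓ.castSucc with hα'
    have hα'0 : ∀ j, 0 ≤ α' j := fun j => hα _
    obtain ⟨ih1, ih2⟩ := ih α' hα'0
    set c : ℝ := ∏ ℓ : Fin (k+1), 1/(α' ℓ + 1) with hc
    set h : ℕ → ℝ := fun j => (1/((j:ℝ)-1)) * gammaG k α' (j-1) j with hh_def
    have hh : Tendsto h atTop (𝓝 c) := by
      have hmul := ratio_tendsto.mul ih2
      rw [one_mul] at hmul
      apply hmul.congr'
      filter_upwards [eventually_ge_atTop 2] with j hj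
      have hj2 : (2:ℝ) ≤ (j:ℝ) := by exact_mod_cast hj
      show (j:ℝ)/((j:ℝ)-1) * (1/(j:ℝ) * gammaG k α' (j-1) j)
        = 1/((j:ℝ)-1) * gammaG k α' (j-1) j
      have h0 : (j:ℝ) ≠ 0 := by linarith
      have h1 : (j:ℝ) - 1 ≠ 0 := by linarith
      field_simp
    have hprod : ∏ j, 1/(α j + 1) = c / (α (Fin.last (k+1)) + 1) := by
      rw [Fin.prod_univ_castSucc, hc, div_eq_mul_one_div]
      norm_num [hα', div_eq_mul_inv]
    have hfirst : Tendsto (fun n : ℕ => (1/(n:ℝ)) * gammaG (k+1) α n n) atTop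
        (𝓝 (∏ j, 1/(α j + 1))) := by
      rw [hprod]
      refine (weighted_tendsto (hα _) hh).congr fun n => ?_
      rw [gammaG]
    refine ⟨hfirst, ?_⟩
    have hcorr : Tendsto (fun n : ℕ =>
        (1/(n:ℝ)) * (((n:ℝ)/(n:ℝ)) ^ (α (Fin.last (k+1))) * h n)) atTop (𝓝 0) := by
      have := tendsto_one_div_atTop_nhds_zero_nat.mul hh
      rw [zero_mul] at this
      apply this.congr'
      filter_upwards [eventually_ge_atTop 1] with n hn
      have hnpos : (0:ℝ) < n := by exact_mod_cast hn
      rw [div_self hnpos.ne', Real.one_rpow, one_mul]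
    have hdiff := hfirst.sub hcorr
    rw [sub_zero] at hdiff
    apply hdiff.congr'
    filter_upwards [eventually_ge_atTop 1] with n hn
    obtain ⟨m, rfl⟩ := Nat.exists_eq_add_of_le hn
    have hm : (1 + m) - 1 = m := by omega
    have hsum : gammaG (k+1) α (1 + m) (1 + m) = gammaG (k+1) α m (1 + m)
        + (((1+m:ℕ):ℝ)/((1+m:ℕ):ℝ)) ^ (α (Fin.last (k+1))) * h (1+m) := by
      rw [gammaG, gammaG, add_comm 1 m, Finset.sum_Icc_succ_top (by omega)]
    rw [hm, hsum]
    push_cast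
    ring

/-- The `η = 0` convergence statement of Lemma 4.4: for fixed exponents `α_ℓ ≥ 0`,
`Γ_n(α_0,…,α_k,0) = (1/n) ∑_{0 < i_0 < … < i_k ≤ n}
∏_{ℓ<k} (i_ℓ/i_{ℓ+1})^{α_ℓ}/(i_{ℓ+1}-1) · (i_k/n)^{α_k}` converges to
`∏_ℓ 1/(α_ℓ+1)` as `n → ∞`. -/
theorem gamma_sum_tendsto (k : ℕ) (α : Fin (k + 1) → ℝ) (hα : ∀ j, 0 ≤ α j) :
    Tendsto
      (fun n : ℕ =>
        (1 / (n : ℝ)) *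
          ∑ i ∈ (Fintype.piFinset fun _ : Fin (k + 1) => Finset.Icc 1 n).filter
              (fun i : Fin (k + 1) → ℕ => ∀ a b : Fin (k + 1), a < b → i a < i b),
            (∏ ℓ : Fin k,
              (((i ℓ.castSucc : ℝ) / (i ℓ.succ : ℝ)) ^ α ℓ.castSucc *
                (1 / ((i ℓ.succ : ℝ) - 1)))) *
              ((i (Fin.last k) : ℝ) / (n : ℝ)) ^ α (Fin.last k))
      atTop (nhds (∏ j : Fin (k + 1), 1 / (α j + 1))) := by
  refine ((gammaG_tendsto k α hα).1).congr fun n => ?_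
  rw [← gammaP_eq_gammaG]
  rfl
end
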